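/- arXiv:1901.08386 — 2 statements merged into one kernel-verified Lean document; each statement's English description precedes it below -/
import Mathlib

section
/- Let n, m, k be natural numbers with 1 ≤ k ≤ m ≤ n. Then binom(n - (m - k + 1), k - 1) · binom(n - m, m - k + 1) ≥ binom(n - (m + k - 1), m) · binom(m, m - k + 1) whenever n ≥ 2m. -/
theorem stmt_17 (n m k : ℕ) (hk1 : 1 ≤ k) (hkm : k ≤ m) (hmn : m ≤ n) (hn : 2 * m ≤ n) :
    Nat.choose (n - (m - k + 1)) (k - 1) * Nat.choose (n - m) (m - k + 1)
      ≥ Nat.choose (n - (m + k - 1)) m * Nat.choose m (m - k + 1) := by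
  set a := n - m with ha
  set j := k - 1 with hj
  have h1 : n - (m - k + 1) = a + j := by omega
  have h2 : m - k + 1 = m - j := by omega
  have h3 : n - (m + k - 1) = a - j := by omega
  have hjm : j ≤ m := by omega
  have hma : m ≤ a := by omega
  rw [h1, h2, h3, Nat.choose_symm hjm]
  calc Nat.choose (a - j) m * Nat.choose m j
      ≤ Nat.choose a m * Nat.choose m j := by
        exact Nat.mul_le_mul_right _ (Nat.choose_le_choose _ (Nat.sub_le _ _))
    _ = Nat.choose a j * Nat.choose (a - j) (m - j) := Nat.choose_mul hjm
    _ ≤ Nat.choose (a + j) j * Nat.choose a (m - j) := by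
        exact Nat.mul_le_mul (Nat.choose_le_choose _ (Nat.le_add_right _ _))
          (Nat.choose_le_choose _ (Nat.sub_le _ _))
end

section
/- For every real x with 0 < x ≤ 1/√32, log((1/2 + 2x)/(1/2 - 2x)) < 16x. -/
theorem stmt_18 (x : ℝ) (hx0 : 0 < x) (hx : x ≤ 1 / Real.sqrt 32) :
    Real.log ((1/2 + 2*x) / (1/2 - 2*x)) < 16 * x := by
  have h32 : (0:ℝ) < Real.sqrt 32 := Real.sqrt_pos.mpr (by norm_num)
  have hmul : x * Real.sqrt 32 ≤ 1 := by
    rw [← le_div_iff₀ h32]; exact hx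
  have hsq : Real.sqrt 32 ^ 2 = 32 := Real.sq_sqrt (by norm_num)
  have hx2 : 32 * x ^ 2 ≤ 1 := by
    nlinarith [Real.sqrt_nonneg 32, mul_nonneg hx0.le (Real.sqrt_nonneg 32)]
  have hd : 0 < 1/2 - 2*x := by nlinarith
  have hn : 0 < 1/2 + 2*x := by linarith
  rw [Real.log_lt_iff_lt_exp (by positivity)]
  have he : (1 + 8*x)^2 < Real.exp (16*x) := by
    have h1 : 8*x + 1 < Real.exp (8*x) := Real.add_one_lt_exp (by positivity)
    have h2 : Real.exp (16*x) = Real.exp (8*x) * Real.exp (8*x) := by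
      rw [← Real.exp_add]; ring_nf
    nlinarith [Real.exp_pos (8*x)]
  rw [div_lt_iff₀ hd]
  nlinarith [mul_lt_mul_of_pos_right he hd, hx2, hx0]
end
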